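/- Let f ∈ ℤ[X] with 0 < |f(a)| < |f(b)| for integers a, b, and assume gcd(f(a), f'(a)) = gcd(f(b), f'(b)) = 1. Let M be the maximum absolute value of the roots of f, let k ≥ 1 and let q^u_k = max{ d₂/d₁ ≤ (|f(b)|/|f(a)|)^(1/(k+1)) : d₁ a unitary divisor of f(a), d₂ a unitary divisor of f(b) }. If |b| > q^u_k·|a| + (1 + q^u_k)·M, then f is a product of at most k irreducible factors over ℚ. -/

import Mathlib

open Polynomial Real

noncomputable section

/-- `d` is an admissible divisor of `f(a)`. -/
def AdmDiv (f : Polynomial ℤ) (a d : ℤ) : Prop :=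
  d ∣ f.eval a ∧
    Int.gcd d (f.eval a / d) ∣ Int.gcd (f.eval a) (f.derivative.eval a)

/-- `d` is a unitary divisor of `N`. -/
def UnitDiv (N d : ℤ) : Prop := d ∣ N ∧ Int.gcd d (N / d) = 1

/-- `f` is a product of at most `k` nonconstant irreducible factors over `ℚ`
(counting multiplicities): it cannot be written as a product of `k + 1`
nonconstant polynomials over `ℚ`. -/
def FactorsAtMost (f : Polynomial ℤ) (k : ℕ) : Prop :=
  ∀ g : Fin (k + 1) → Polynomial ℚ, (∀ i, 0 < (g i).natDegree) →
    f.map (Int.castRingHom ℚ) ≠ ∏ i, g i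

/-- `q` is the quantity `q_k` of the paper: the greatest ratio `d₂/d₁` of
admissible divisors of `f(b)` and `f(a)` not exceeding `(|f(b)|/|f(a)|)^(1/(k+1))`. -/
def IsQk (f : Polynomial ℤ) (a b : ℤ) (k : ℕ) (q : ℝ) : Prop :=
  IsGreatest {x : ℝ | ∃ d₁ d₂ : ℤ, AdmDiv f a d₁ ∧ AdmDiv f b d₂ ∧
    x = (d₂ : ℝ) / (d₁ : ℝ) ∧
    x ≤ (|((f.eval b : ℤ) : ℝ)| / |((f.eval a : ℤ) : ℝ)|) ^ ((k + 1 : ℝ))⁻¹} q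

/-- `q` is the quantity `q^u_k` of the paper, defined via unitary divisors. -/
def IsQuk (f : Polynomial ℤ) (a b : ℤ) (k : ℕ) (q : ℝ) : Prop :=
  IsGreatest {x : ℝ | ∃ d₁ d₂ : ℤ, UnitDiv (f.eval a) d₁ ∧ UnitDiv (f.eval b) d₂ ∧
    x = (d₂ : ℝ) / (d₁ : ℝ) ∧
    x ≤ (|((f.eval b : ℤ) : ℝ)| / |((f.eval a : ℤ) : ℝ)|) ^ ((k + 1 : ℝ))⁻¹} q

/-! ### Auxiliary lemmas -/

lemma ms_prod_nonneg {s : Multiset ℂ} {F : ℂ → ℝ} (h : ∀ x ∈ s, 0 ≤ F x) :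
    0 ≤ (s.map F).prod := by
  induction s using Multiset.induction with
  | empty => simp
  | cons a s ih =>
    simp only [Multiset.map_cons, Multiset.prod_cons]
    exact mul_nonneg (h a (Multiset.mem_cons_self a s))
      (ih fun x hx => h x (Multiset.mem_cons_of_mem hx))

lemma ms_prod_le {s : Multiset ℂ} {F G : ℂ → ℝ}
    (h : ∀ x ∈ s, 0 ≤ F x ∧ F x ≤ G x) : (s.map F).prod ≤ (s.map G).prod := by
  induction s using Multiset.induction with
  | empty => simp
  | cons a s ih =>
    simp only [Multiset.map_cons, Multiset.prod_cons]
    have h1 := h a (Multiset.mem_cons_self a s)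
    have h2 : ∀ x ∈ s, 0 ≤ F x ∧ F x ≤ G x := fun x hx => h x (Multiset.mem_cons_of_mem hx)
    have hF : 0 ≤ (s.map F).prod := ms_prod_nonneg fun x hx => (h2 x hx).1
    exact mul_le_mul h1.2 (ih h2) hF (le_trans h1.1 h1.2)

lemma primPart_prod {ι : Type*} (s : Finset ι) (H : ι → Polynomial ℤ)
    (h : ∀ i ∈ s, H i ≠ 0) : (∏ i ∈ s, H i).primPart = ∏ i ∈ s, (H i).primPart := by
  classical
  induction s using Finset.induction with
  | empty => exact isPrimitive_one.primPart_eq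
  | insert a s hni ih =>
    rw [Finset.prod_insert hni, Finset.prod_insert hni,
      Polynomial.primPart_mul, ih (fun i hi => h i (Finset.mem_insert_of_mem hi))]
    exact mul_ne_zero (h a (Finset.mem_insert_self a s))
      (Finset.prod_ne_zero_iff.mpr (fun i hi => h i (Finset.mem_insert_of_mem hi)))

def Complex.abs : AbsoluteValue ℂ ℝ := IsAbsoluteValue.toAbsoluteValue (norm : ℂ → ℝ)

lemma Complex.abs_intCast (n : ℤ) : Complex.abs (n : ℂ) = |(n : ℝ)| := by
  show ‖(n : ℂ)‖ = _
  exact Complex.norm_intCast n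

lemma key_est (h : Polynomial ℤ) (hdeg : 0 < h.natDegree) (a b : ℤ)
    (hA : h.eval a ≠ 0) (M : ℝ)
    (hM : ∀ θ : ℂ, (h.map (Int.castRingHom ℂ)).eval θ = 0 → Complex.abs θ ≤ M)
    (r : ℝ) (hr : 1 ≤ r) (hrb : r * ((|a| : ℝ) + M) ≤ (|b| : ℝ) - M) :
    r * |((h.eval a : ℤ) : ℝ)| ≤ |((h.eval b : ℤ) : ℝ)| := by
  set P : Polynomial ℂ := h.map (Int.castRingHom ℂ) with hP
  have hinj : Function.Injective (Int.castRingHom ℂ) := Int.cast_injective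
  have hh0 : h ≠ 0 := fun h0 => hA (by simp [h0])
  have hP0 : P ≠ 0 := (Polynomial.map_ne_zero_iff hinj).mpr hh0
  have hsplit : P.Splits := IsAlgClosed.splits P
  have hdecomp : P = C P.leadingCoeff * (P.roots.map fun θ => X - C θ).prod :=
    hsplit.eq_prod_roots
  have heval : ∀ z : ℂ, Complex.abs (P.eval z)
      = Complex.abs P.leadingCoeff * (P.roots.map fun θ => Complex.abs (z - θ)).prod := by
    intro z
    conv_lhs => rw [hdecomp]
    rw [eval_mul, eval_C, map_mul, eval_multiset_prod, Multiset.map_map, map_multiset_prod,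
      Multiset.map_map]
    congr 1
    congr 1
    ext θ
    simp
  have hroots : ∀ θ ∈ P.roots, Complex.abs θ ≤ M := fun θ hθ =>
    hM θ (Polynomial.isRoot_of_mem_roots hθ)
  have hcard : 1 ≤ P.roots.card := by
    have h1 : P.natDegree = P.roots.card := by
      rw [hsplit.natDegree_eq_card_roots]
    have h2 : P.natDegree = h.natDegree := by
      rw [hP]; exact natDegree_map_eq_of_injective hinj h
    omega
  -- per-root inequality
  have hFG : ∀ θ ∈ P.roots, 0 ≤ r * Complex.abs ((a : ℂ) - θ) ∧
      r * Complex.abs ((a : ℂ) - θ) ≤ Complex.abs ((b : ℂ) - θ) := by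
    intro θ hθ
    have hθM := hroots θ hθ
    have h1 : Complex.abs ((a : ℂ) - θ) ≤ (|a| : ℝ) + M := by
      have ha' : Complex.abs ((a : ℤ) : ℂ) = |((a : ℤ) : ℝ)| := Complex.abs_intCast a
      calc Complex.abs ((a : ℂ) - θ) ≤ Complex.abs (a : ℂ) + Complex.abs θ :=
            AbsoluteValue.sub_le_add _ _ _
        _ ≤ (|a| : ℝ) + M := by rw [ha']; gcongr
    have h2 : (|b| : ℝ) - M ≤ Complex.abs ((b : ℂ) - θ) := by
      have hb' : Complex.abs ((b : ℤ) : ℂ) = |((b : ℤ) : ℝ)| := Complex.abs_intCast b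
      have := AbsoluteValue.le_sub Complex.abs ((b : ℂ)) θ
      rw [hb'] at this
      linarith
    have hr0 : 0 ≤ r := le_trans zero_le_one hr
    constructor
    · exact mul_nonneg hr0 (AbsoluteValue.nonneg _ _)
    · calc r * Complex.abs ((a : ℂ) - θ) ≤ r * ((|a| : ℝ) + M) := by gcongr
        _ ≤ (|b| : ℝ) - M := hrb
        _ ≤ Complex.abs ((b : ℂ) - θ) := h2
  have hprodle : (P.roots.map fun θ => r * Complex.abs ((a:ℂ) - θ)).prod
      ≤ (P.roots.map fun θ => Complex.abs ((b:ℂ) - θ)).prod := ms_prod_le hFG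
  have hsplitL : (P.roots.map fun θ => r * Complex.abs ((a:ℂ) - θ)).prod
      = r ^ P.roots.card * (P.roots.map fun θ => Complex.abs ((a:ℂ) - θ)).prod := by
    rw [show (fun θ => r * Complex.abs ((a:ℂ) - θ))
        = fun θ => (fun _ => r) θ * (fun θ => Complex.abs ((a:ℂ) - θ)) θ from rfl,
      Multiset.prod_map_mul]
    congr 1
    rw [Multiset.map_const', Multiset.prod_replicate]
  have hannn : 0 ≤ (P.roots.map fun θ => Complex.abs ((a:ℂ) - θ)).prod :=
    ms_prod_nonneg fun x _ => AbsoluteValue.nonneg _ _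
  have hrpow : r * (P.roots.map fun θ => Complex.abs ((a:ℂ) - θ)).prod
      ≤ r ^ P.roots.card * (P.roots.map fun θ => Complex.abs ((a:ℂ) - θ)).prod := by
    gcongr
    exact le_self_pow₀ hr (by omega)
  have hea : Complex.abs (P.eval ((a : ℤ) : ℂ)) = |((h.eval a : ℤ) : ℝ)| := by
    rw [hP, Polynomial.eval_intCast_map]
    exact_mod_cast Complex.abs_intCast _
  have heb : Complex.abs (P.eval ((b : ℤ) : ℂ)) = |((h.eval b : ℤ) : ℝ)| := by
    rw [hP, Polynomial.eval_intCast_map]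
    exact_mod_cast Complex.abs_intCast _
  have hlcnn : 0 ≤ Complex.abs P.leadingCoeff := AbsoluteValue.nonneg _ _
  calc r * |((h.eval a : ℤ) : ℝ)| = r * Complex.abs (P.eval ((a:ℤ):ℂ)) := by rw [hea]
    _ = Complex.abs P.leadingCoeff *
        (r * (P.roots.map fun θ => Complex.abs ((a:ℂ) - θ)).prod) := by
          rw [heval]; ring
    _ ≤ Complex.abs P.leadingCoeff *
        (r ^ P.roots.card * (P.roots.map fun θ => Complex.abs ((a:ℂ) - θ)).prod) := by
          gcongr
    _ = Complex.abs P.leadingCoeff *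
        (P.roots.map fun θ => r * Complex.abs ((a:ℂ) - θ)).prod := by rw [hsplitL]
    _ ≤ Complex.abs P.leadingCoeff *
        (P.roots.map fun θ => Complex.abs ((b:ℂ) - θ)).prod := by gcongr
    _ = Complex.abs (P.eval ((b:ℤ):ℂ)) := by rw [heval]
    _ = |((h.eval b : ℤ) : ℝ)| := heb

lemma eval_coprime {n : ℕ} (hp : Fin n → Polynomial ℤ) (f : Polynomial ℤ) (ε : ℤ)
    (hf : f = C ε * ∏ l, hp l) (t : ℤ)
    (hg : Int.gcd (f.eval t) ((derivative f).eval t) = 1)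
    {i j : Fin n} (hij : i ≠ j) :
    Int.gcd ((hp i).eval t) ((hp j).eval t) = 1 := by
  classical
  set d : ℤ := (Int.gcd ((hp i).eval t) ((hp j).eval t) : ℤ) with hd
  have hdi : d ∣ (hp i).eval t := Int.gcd_dvd_left _ _
  have hdj : d ∣ (hp j).eval t := Int.gcd_dvd_right _ _
  have hjmem : j ∈ Finset.univ.erase i := Finset.mem_erase.mpr ⟨hij.symm, Finset.mem_univ j⟩
  have hfact : (∏ l, hp l) = hp i * (hp j * ∏ l ∈ (Finset.univ.erase i).erase j, hp l) := by
    rw [← Finset.mul_prod_erase _ _ (Finset.mem_univ i), ← Finset.mul_prod_erase _ _ hjmem]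
  have h1 : d ∣ (∏ l, hp l).eval t := by
    rw [hfact, eval_mul]
    exact (hdi.mul_right _)
  have h2 : d ∣ (derivative (∏ l, hp l)).eval t := by
    rw [hfact, derivative_mul, eval_add, eval_mul, eval_mul, eval_mul]
    exact dvd_add ((hdj.mul_right _).mul_left _) (hdi.mul_right _)
  have h3 : d ∣ f.eval t := by
    rw [hf, eval_mul, eval_C]
    exact h1.mul_left ε
  have h4 : d ∣ (derivative f).eval t := by
    rw [hf, derivative_C_mul, eval_mul, eval_C]
    exact h2.mul_left ε
  have h5 : d ∣ (Int.gcd (f.eval t) ((derivative f).eval t) : ℤ) := Int.dvd_coe_gcd h3 h4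
  rw [hg, hd] at h5
  exact Nat.dvd_one.mp (by exact_mod_cast h5)

lemma gcd_abs_unit (x y u : ℤ) (hu : u = 1 ∨ u = -1) :
    Int.gcd |x| (u * y) = Int.gcd x y := by
  rcases hu with rfl | rfl <;>
    simp [Int.gcd, Int.natAbs_mul, Int.natAbs_abs]

lemma unitDiv_of {n : ℕ} (N : ℤ) (A : Fin n → ℤ) (ε : ℤ) (hN : N = ε * ∏ l, A l)
    (i : Fin n) (hcop : ∀ j, j ≠ i → Int.gcd (A i) (A j) = 1) (hAi : A i ≠ 0)
    (hε : ε = 1 ∨ ε = -1) : UnitDiv N |A i| := by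
  classical
  set Q : ℤ := ε * ∏ l ∈ Finset.univ.erase i, A l with hQ
  have hsplit : N = A i * Q := by
    rw [hN, hQ, ← Finset.mul_prod_erase _ _ (Finset.mem_univ i)]; ring
  have hgcd1 : Int.gcd (A i) (∏ l ∈ Finset.univ.erase i, A l) = 1 := by
    rw [← Int.isCoprime_iff_gcd_eq_one]
    exact IsCoprime.prod_right fun j hj =>
      Int.isCoprime_iff_gcd_eq_one.mpr (hcop j (Finset.mem_erase.mp hj).1)
  have habs0 : |A i| ≠ 0 := by simpa using hAi
  rcases abs_choice (A i) with h | h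
  · refine ⟨⟨Q, by rw [h, ← hsplit]⟩, ?_⟩
    have hdiv : N / |A i| = Q := by
      rw [h, hsplit, Int.mul_ediv_cancel_left _ hAi]
    rw [hdiv, hQ, gcd_abs_unit _ _ _ hε]
    exact hgcd1
  · have hsplit2 : N = |A i| * (-Q) := by rw [h, hsplit]; ring
    refine ⟨⟨-Q, by rw [← hsplit2]⟩, ?_⟩
    have hdiv : N / |A i| = -Q := by
      rw [hsplit2, Int.mul_ediv_cancel_left _ habs0]
    rw [hdiv, hQ]
    have : -(ε * ∏ l ∈ Finset.univ.erase i, A l)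
        = (-ε) * ∏ l ∈ Finset.univ.erase i, A l := by ring
    rw [this, gcd_abs_unit _ _ _ (by rcases hε with rfl | rfl <;> simp)]
    exact hgcd1

/-- Factorization over ℚ yields a factorization over ℤ up to sign,
given that the content of `f` is 1. -/
lemma int_factorization {m : ℕ} (f : Polynomial ℤ) (hcf : f.content = 1)
    (g : Fin m → Polynomial ℚ) (hgdeg : ∀ i, 0 < (g i).natDegree)
    (heq : f.map (Int.castRingHom ℚ) = ∏ i, g i) :
    ∃ (p : Fin m → Polynomial ℤ) (ε : ℤ), (ε = 1 ∨ ε = -1) ∧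
      f = C ε * ∏ i, p i ∧ ∀ i, 0 < (p i).natDegree := by
  classical
  have hinjQ : Function.Injective (Int.castRingHom ℚ) := Int.cast_injective
  have hgne : ∀ i, g i ≠ 0 := fun i h0 => by
    have := hgdeg i
    rw [h0] at this
    simp at this
  have hstep : ∀ i : Fin m, ∃ (c : ℤ) (H : Polynomial ℤ), c ≠ 0 ∧
      H.map (Int.castRingHom ℚ) = C (c : ℚ) * g i := by
    intro i
    obtain ⟨b', hb'⟩ :=
      IsLocalization.integerNormalization_map_to_map (nonZeroDivisors ℤ) (g i)
    refine ⟨(b' : ℤ), IsLocalization.integerNormalization (nonZeroDivisors ℤ) (g i),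
      nonZeroDivisors.coe_ne_zero b', ?_⟩
    rw [algebraMap_int_eq] at hb'
    rw [hb', ← Polynomial.smul_eq_C_mul, ← Int.cast_smul_eq_zsmul ℚ]
  choose c H hc0 hH using hstep
  have hH0 : ∀ i, H i ≠ 0 := by
    intro i h0
    have : (H i).map (Int.castRingHom ℚ) = 0 := by rw [h0, Polynomial.map_zero]
    rw [hH i] at this
    exact (mul_ne_zero (by exact_mod_cast (Polynomial.C_ne_zero.mpr
      (by exact_mod_cast hc0 i))) (hgne i)) this
  have hdegH : ∀ i, (H i).natDegree = (g i).natDegree := by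
    intro i
    have h1 := natDegree_map_eq_of_injective hinjQ (H i)
    rw [hH i, natDegree_C_mul (by exact_mod_cast hc0 i)] at h1
    exact h1.symm
  set cc : ℤ := ∏ i, c i with hcc
  have hcc0 : cc ≠ 0 := Finset.prod_ne_zero_iff.mpr fun i _ => hc0 i
  have hbig : ∏ i, H i = C cc * f := by
    apply Polynomial.map_injective _ hinjQ
    rw [Polynomial.map_prod, Polynomial.map_mul, Polynomial.map_C, heq]
    simp only [hH]
    rw [Finset.prod_mul_distrib, ← map_prod (Polynomial.C : ℚ →+* Polynomial ℚ)]
    rw [eq_intCast, Int.cast_prod]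
  -- take primitive parts
  set p : Fin m → Polynomial ℤ := fun i => (H i).primPart with hp
  have hppr : (∏ i, H i).primPart = ∏ i, p i := primPart_prod _ _ fun i _ => hH0 i
  have hcontent : (C cc * f).content = |cc| := by
    rw [content_C_mul, hcf, mul_one, ← Int.abs_eq_normalize]
  have hkey : C cc * f = C |cc| * ∏ i, p i := by
    conv_lhs => rw [(C cc * f).eq_C_content_mul_primPart]
    rw [hcontent, ← hbig, hppr]
  have hdegp : ∀ i, 0 < (p i).natDegree := by
    intro i
    rw [hp]
    simp only [natDegree_primPart]
    rw [hdegH i]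
    exact hgdeg i
  rcases abs_choice cc with h | h
  · refine ⟨p, 1, Or.inl rfl, ?_, hdegp⟩
    rw [h] at hkey
    have := mul_left_cancel₀ (show (C cc : Polynomial ℤ) ≠ 0 by
      simpa using hcc0) hkey
    rw [this]
    simp
  · refine ⟨p, -1, Or.inr rfl, ?_, hdegp⟩
    rw [h] at hkey
    have h2 : C cc * f = C cc * (C (-1 : ℤ) * ∏ i, p i) := by
      rw [hkey]
      simp only [map_neg, map_one]
      ring
    exact mul_left_cancel₀ (show (C cc : Polynomial ℤ) ≠ 0 by simpa using hcc0) h2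

theorem stmt15 (f : Polynomial ℤ) (a b : ℤ) (k : ℕ) (hk : 1 ≤ k)
    (ha : f.eval a ≠ 0) (hab : |f.eval a| < |f.eval b|)
    (hga : Int.gcd (f.eval a) (f.derivative.eval a) = 1)
    (hgb : Int.gcd (f.eval b) (f.derivative.eval b) = 1)
    (M : ℝ) (hM : ∀ θ : ℂ, aeval θ f = 0 → ‖θ‖ ≤ M)
    (q : ℝ) (hq : IsQuk f a b k q)
    (hb : (|b| : ℝ) > q * (|a| : ℝ) + (1 + q) * M) :
    FactorsAtMost f k := by
  classical
  intro g hgdeg heq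
  -- content of f is 1
  have hcf : f.content = 1 := by
    have h1 : f.content ∣ f.eval a := by
      refine ⟨f.primPart.eval a, ?_⟩
      conv_lhs => rw [f.eq_C_content_mul_primPart]
      rw [eval_mul, eval_C]
    have h2 : f.content ∣ (derivative f).eval a := by
      refine ⟨(derivative f.primPart).eval a, ?_⟩
      conv_lhs => rw [f.eq_C_content_mul_primPart]
      rw [derivative_C_mul, eval_mul, eval_C]
    have h3 : f.content ∣ (Int.gcd (f.eval a) ((derivative f).eval a) : ℤ) :=
      Int.dvd_coe_gcd h1 h2
    rw [hga] at h3
    have h4 : f.content ∣ 1 := by exact_mod_cast h3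
    rcases Int.isUnit_iff.mp (isUnit_of_dvd_one h4) with h | h
    · exact h
    · exfalso
      have hnn : 0 ≤ f.content := by
        have h5 := Polynomial.normalize_content (p := f)
        rw [← Int.abs_eq_normalize] at h5
        rw [← h5]
        exact abs_nonneg _
      rw [h] at hnn
      norm_num at hnn
  obtain ⟨p, ε, hε, hfeq, hdegp⟩ := int_factorization f hcf g hgdeg heq
  -- evaluations
  have hfa : f.eval a = ε * ∏ i, (p i).eval a := by
    rw [hfeq, eval_mul, eval_C, eval_prod]
  have hfb : f.eval b = ε * ∏ i, (p i).eval b := by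
    rw [hfeq, eval_mul, eval_C, eval_prod]
  have hfb0 : f.eval b ≠ 0 := by
    intro h0
    rw [h0] at hab
    simp only [abs_zero] at hab
    exact absurd hab (not_lt.mpr (abs_nonneg _))
  have hA0 : ∀ i, (p i).eval a ≠ 0 := by
    intro i h0
    exact ha (by rw [hfa, Finset.prod_eq_zero (Finset.mem_univ i) h0, mul_zero])
  have hB0 : ∀ i, (p i).eval b ≠ 0 := by
    intro i h0
    exact hfb0 (by rw [hfb, Finset.prod_eq_zero (Finset.mem_univ i) h0, mul_zero])
  have hcopA : ∀ i j : Fin (k+1), i ≠ j →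
      Int.gcd ((p i).eval a) ((p j).eval a) = 1 :=
    fun i j hij => eval_coprime p f ε hfeq a hga hij
  have hcopB : ∀ i j : Fin (k+1), i ≠ j →
      Int.gcd ((p i).eval b) ((p j).eval b) = 1 :=
    fun i j hij => eval_coprime p f ε hfeq b hgb hij
  -- real quantities
  set T : ℝ := |((f.eval b : ℤ) : ℝ)| / |((f.eval a : ℤ) : ℝ)| with hT
  have hfa_pos : (0:ℝ) < |((f.eval a : ℤ) : ℝ)| := by
    simp only [abs_pos]
    exact_mod_cast ha
  have hfb_pos : (0:ℝ) < |((f.eval b : ℤ) : ℝ)| := by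
    simp only [abs_pos]
    exact_mod_cast hfb0
  have hT1 : 1 < T := by
    rw [hT, lt_div_iff₀ hfa_pos, one_mul]
    exact_mod_cast hab
  have hT0 : 0 < T := lt_trans one_pos hT1
  set x : Fin (k+1) → ℝ := fun i => |(((p i).eval b : ℤ) : ℝ)| / |(((p i).eval a : ℤ) : ℝ)|
    with hx
  have hxpos : ∀ i, 0 < x i := fun i =>
    div_pos (by simp only [abs_pos]; exact_mod_cast hB0 i)
      (by simp only [abs_pos]; exact_mod_cast hA0 i)
  have habsprod : ∀ t : ℤ, f.eval t = ε * ∏ i, (p i).eval t →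
      |((f.eval t : ℤ) : ℝ)| = ∏ i, |(((p i).eval t : ℤ) : ℝ)| := by
    intro t ht
    rw [ht]
    push_cast
    rw [abs_mul, Finset.abs_prod]
    rcases hε with rfl | rfl <;> simp
  have hprodx : ∏ i, x i = T := by
    rw [hT, habsprod a hfa, habsprod b hfb, hx]
    rw [Finset.prod_div_distrib]
  -- pigeonhole
  have hpig : ∃ i, x i ≤ T ^ (((k:ℝ) + 1))⁻¹ := by
    by_contra hcon
    push_neg at hcon
    have hTe : (0:ℝ) < T ^ (((k:ℝ) + 1))⁻¹ := Real.rpow_pos_of_pos hT0 _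
    have hlt := Finset.prod_lt_prod_of_nonempty
      (f := fun _ : Fin (k+1) => T ^ (((k:ℝ) + 1))⁻¹) (g := x)
      (fun i _ => hTe) (fun i _ => hcon i) Finset.univ_nonempty
    rw [Finset.prod_const, Finset.card_univ, Fintype.card_fin, hprodx] at hlt
    have hEq : (T ^ (((k:ℝ) + 1))⁻¹) ^ (k+1 : ℕ) = T := by
      rw [← Real.rpow_natCast (T ^ (((k:ℝ) + 1))⁻¹) (k+1), ← Real.rpow_mul (le_of_lt hT0)]
      have : (((k:ℝ)+1))⁻¹ * ((k+1 : ℕ) : ℝ) = 1 := by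
        push_cast
        field_simp
      rw [this, Real.rpow_one]
    rw [hEq] at hlt
    exact lt_irrefl T hlt
  obtain ⟨i, hxi⟩ := hpig
  -- q ≥ 1
  have hq1 : 1 ≤ q := by
    apply hq.2
    refine ⟨1, 1, ⟨one_dvd _, by simp⟩, ⟨one_dvd _, by simp⟩, by norm_num, ?_⟩
    calc (1:ℝ) = 1 ^ (((k:ℝ) + 1))⁻¹ := (Real.one_rpow _).symm
      _ ≤ T ^ (((k:ℝ) + 1))⁻¹ :=
          Real.rpow_le_rpow zero_le_one (le_of_lt hT1) (by positivity)
  -- x i ≤ q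
  have hxq : x i ≤ q := by
    apply hq.2
    refine ⟨|(p i).eval a|, |(p i).eval b|,
      unitDiv_of (f.eval a) (fun j => (p j).eval a) ε hfa i
        (fun j hj => hcopA i j (Ne.symm hj)) (hA0 i) hε,
      unitDiv_of (f.eval b) (fun j => (p j).eval b) ε hfb i
        (fun j hj => hcopB i j (Ne.symm hj)) (hB0 i) hε, ?_, hxi⟩
    rw [hx]
    push_cast [Int.cast_abs]
    rfl
  -- the complex-analytic lower bound
  set P : Polynomial ℂ := (p i).map (Int.castRingHom ℂ) with hPdef
  have hrootf : ∀ θ : ℂ, P.eval θ = 0 → Complex.abs θ ≤ M := by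
    intro θ hθ
    apply hM
    have haev : aeval θ f = (f.map (Int.castRingHom ℂ)).eval θ := by
      rw [Polynomial.eval_map, aeval_def, algebraMap_int_eq]
    rw [haev, hfeq, Polynomial.map_mul, Polynomial.map_C, Polynomial.map_prod,
      eval_mul, eval_prod]
    apply mul_eq_zero_of_right
    exact Finset.prod_eq_zero (Finset.mem_univ i) (hPdef ▸ hθ)
  have hPdeg : 0 < P.natDegree := by
    rw [hPdef, natDegree_map_eq_of_injective Int.cast_injective]
    exact hdegp i
  have hPne : P ≠ 0 := fun h0 => by simp [h0] at hPdeg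
  have hPdegne : P.degree ≠ 0 := by
    intro h0
    rw [degree_eq_natDegree hPne] at h0
    have : P.natDegree = 0 := by exact_mod_cast h0
    omega
  obtain ⟨θ, hθroot⟩ := IsAlgClosed.exists_root P hPdegne
  have hθM : Complex.abs θ ≤ M := hrootf θ hθroot
  have haθ : ((a:ℤ):ℂ) ≠ θ := by
    intro h0
    apply hA0 i
    have : P.eval ((a:ℤ):ℂ) = (((p i).eval a : ℤ) : ℂ) := by
      rw [hPdef, Polynomial.eval_intCast_map]; rfl
    rw [h0, hθroot] at this
    exact_mod_cast this.symm
  have haM : 0 < (|a| : ℝ) + M := by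
    have h1 : 0 < Complex.abs (((a:ℤ):ℂ) - θ) := by
      rw [AbsoluteValue.pos_iff]
      exact sub_ne_zero_of_ne haθ
    have h2 : Complex.abs (((a:ℤ):ℂ) - θ) ≤ (|a| : ℝ) + M := by
      have ha' : Complex.abs ((a : ℤ) : ℂ) = |((a : ℤ) : ℝ)| := Complex.abs_intCast a
      calc Complex.abs (((a:ℤ):ℂ) - θ) ≤ Complex.abs ((a:ℤ):ℂ) + Complex.abs θ :=
            AbsoluteValue.sub_le_add _ _ _
        _ ≤ (|a| : ℝ) + M := by rw [ha']; gcongr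
    linarith
  set r : ℝ := ((|b| : ℝ) - M) / ((|a| : ℝ) + M) with hr
  have hqr : q < r := by
    rw [hr, lt_div_iff₀ haM]
    nlinarith [hb]
  have hr1 : 1 ≤ r := le_of_lt (lt_of_le_of_lt hq1 hqr)
  have hrb : r * ((|a| : ℝ) + M) ≤ (|b| : ℝ) - M := by
    rw [hr, div_mul_cancel₀ _ (ne_of_gt haM)]
  have hkey := key_est (p i) (hdegp i) a b (hA0 i) M hrootf r hr1 hrb
  have hxgt : r ≤ x i := by
    rw [hx]
    rw [le_div_iff₀ (by simp only [abs_pos]; exact_mod_cast hA0 i)]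
    exact hkey
  linarith [hxq, hqr, hxgt]
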